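/- Fix a real number φ and integers k₁, k₆. Let w(r,r') = x y' for r = (x,y), r' = (x',y'), and suppose λ : (ℤ²)³ → ℝ satisfies λ(r₂,r₃,r₄) − λ(r₁+r₂,r₃,r₄) + λ(r₁,r₂+r₃,r₄) − λ(r₁,r₂,r₃+r₄) + λ(r₁,r₂,r₃) = w(r₁,r₂)·w(r₃,r₄) for all r_i ∈ ℤ². On G = U(1)⋉_φℤ² (Landau gauge), represent U(1)-components by z ∈ [0,1), set F(g₁,g₂) = z₁ + z₂ + φ w(r₁,r₂) − z₁₂ (an integer), and define the 3-cochain f(g₁,g₂,g₃) = k₁·(z₁ F(g₂,g₃) + φ w(r₁,r₂) z₃ + φ² λ(r₁,r₂,r₃)) + k₆·(z₁ w(r₂,r₃) + φ λ(r₁,r₂,r₃)). Then the coboundary of f satisfies (df)(g₁,g₂,g₃,g₄) = k₁ F(g₁,g₂) F(g₃,g₄) + k₆ F(g₁,g₂) w(r₃,r₄), which is an integer; consequently f reduced modulo 1 is an (ℝ/ℤ)-valued 3-cocycle on U(1)⋉_φℤ². -/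
import Mathlib


noncomputable section

/-- The underlying set `(ℝ/ℤ) × ℤ²` of the magnetic translation group. -/
abbrev MagTrans : Type := AddCircle (1 : ℝ) × (Fin 2 → ℤ)

/-- Landau-gauge magnetic translation multiplication with flux `φ` per unit cell. -/
def magMulL (φ : ℝ) (g₁ g₂ : MagTrans) : MagTrans :=
  (g₁.1 + g₂.1 + (↑(φ * (g₁.2 0 : ℝ) * (g₂.2 1 : ℝ)) : AddCircle (1 : ℝ)), g₁.2 + g₂.2)

/-- The representative in `[0,1)` of an element of `ℝ/ℤ`. -/
def rep1 (z : AddCircle (1 : ℝ)) : ℝ :=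
  haveI : Fact ((0 : ℝ) < 1) := ⟨one_pos⟩
  (AddCircle.equivIco 1 0 z : ℝ)

/-- The Landau-gauge area cocycle `w(r,r') = x y'`. -/
def wL (r r' : Fin 2 → ℤ) : ℤ := r 0 * r' 1

/-- The integral flux cocycle `F(g₁,g₂) = z₁ + z₂ + φ w(r₁,r₂) − z₁₂`. -/
def FI (φ : ℝ) (g₁ g₂ : MagTrans) : ℝ :=
  rep1 g₁.1 + rep1 g₂.1 + φ * (wL g₁.2 g₂.2 : ℝ) - rep1 (magMulL φ g₁ g₂).1

/-- The SPT 3-cochain with integer quantum Hall level `k₁` and filling `k₆`. -/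
def sptL (φ : ℝ) (k₁ k₆ : ℤ) (lam : (Fin 2 → ℤ) → (Fin 2 → ℤ) → (Fin 2 → ℤ) → ℝ)
    (g₁ g₂ g₃ : MagTrans) : ℝ :=
  (k₁ : ℝ) * (rep1 g₁.1 * FI φ g₂ g₃ + φ * (wL g₁.2 g₂.2 : ℝ) * rep1 g₃.1 +
      φ ^ 2 * lam g₁.2 g₂.2 g₃.2) +
    (k₆ : ℝ) * (rep1 g₁.1 * (wL g₂.2 g₃.2 : ℝ) + φ * lam g₁.2 g₂.2 g₃.2)

lemma coe_rep1 (z : AddCircle (1 : ℝ)) : ((rep1 z : ℝ) : AddCircle (1 : ℝ)) = z := by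
  haveI : Fact ((0 : ℝ) < 1) := ⟨one_pos⟩
  exact (AddCircle.equivIco 1 0).symm_apply_apply z

lemma FI_int (φ : ℝ) (g₁ g₂ : MagTrans) : ∃ n : ℤ, FI φ g₁ g₂ = n := by
  have h : ((FI φ g₁ g₂ : ℝ) : AddCircle (1 : ℝ)) = 0 := by
    simp only [FI, wL, magMulL, AddCircle.coe_add, AddCircle.coe_sub, coe_rep1,
      Int.cast_mul, mul_assoc]
    abel
  haveI : Fact ((0 : ℝ) < 1) := ⟨one_pos⟩
  rw [AddCircle.coe_eq_zero_iff] at h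
  obtain ⟨n, hn⟩ := h
  exact ⟨n, by simpa using hn.symm⟩

lemma magAssoc_fst (φ : ℝ) (g₂ g₃ g₄ : MagTrans) :
    (magMulL φ (magMulL φ g₂ g₃) g₄).1 = (magMulL φ g₂ (magMulL φ g₃ g₄)).1 := by
  simp only [magMulL, Pi.add_apply, Int.cast_add]
  rw [show φ * ((g₂.2 0 : ℝ) + (g₃.2 0 : ℝ)) * (g₄.2 1 : ℝ) =
      φ * (g₂.2 0 : ℝ) * (g₄.2 1 : ℝ) + φ * (g₃.2 0 : ℝ) * (g₄.2 1 : ℝ) by ring,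
    show φ * (g₂.2 0 : ℝ) * ((g₃.2 1 : ℝ) + (g₄.2 1 : ℝ)) =
      φ * (g₂.2 0 : ℝ) * (g₃.2 1 : ℝ) + φ * (g₂.2 0 : ℝ) * (g₄.2 1 : ℝ) by ring,
    AddCircle.coe_add, AddCircle.coe_add]
  abel

lemma rep1_magMulL (φ : ℝ) (a b : MagTrans) :
    rep1 (magMulL φ a b).1 = rep1 a.1 + rep1 b.1 + φ * (wL a.2 b.2 : ℝ) - FI φ a b := by
  simp only [FI]; ring

/-- The coboundary of the SPT 3-cochain is the integral 4-cocycle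
`k₁ F(g₁,g₂) F(g₃,g₄) + k₆ F(g₁,g₂) w(r₃,r₄)`; hence the 3-cochain reduced mod 1 is an
`(ℝ/ℤ)`-valued 3-cocycle on the magnetic translation group. -/
theorem magnetic_translation_spt_cocycle (φ : ℝ) (k₁ k₆ : ℤ)
    (lam : (Fin 2 → ℤ) → (Fin 2 → ℤ) → (Fin 2 → ℤ) → ℝ)
    (hlam : ∀ r₁ r₂ r₃ r₄ : Fin 2 → ℤ,
      lam r₂ r₃ r₄ - lam (r₁ + r₂) r₃ r₄ + lam r₁ (r₂ + r₃) r₄ - lam r₁ r₂ (r₃ + r₄) +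
          lam r₁ r₂ r₃ = (wL r₁ r₂ : ℝ) * (wL r₃ r₄ : ℝ)) :
    (∀ g₁ g₂ g₃ g₄ : MagTrans,
      sptL φ k₁ k₆ lam g₂ g₃ g₄ - sptL φ k₁ k₆ lam (magMulL φ g₁ g₂) g₃ g₄ +
          sptL φ k₁ k₆ lam g₁ (magMulL φ g₂ g₃) g₄ - sptL φ k₁ k₆ lam g₁ g₂ (magMulL φ g₃ g₄) +
          sptL φ k₁ k₆ lam g₁ g₂ g₃ =
        (k₁ : ℝ) * FI φ g₁ g₂ * FI φ g₃ g₄ + (k₆ : ℝ) * FI φ g₁ g₂ * (wL g₃.2 g₄.2 : ℝ)) ∧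
    (∀ g₁ g₂ g₃ g₄ : MagTrans, ∃ N : ℤ,
      (k₁ : ℝ) * FI φ g₁ g₂ * FI φ g₃ g₄ + (k₆ : ℝ) * FI φ g₁ g₂ * (wL g₃.2 g₄.2 : ℝ) = N) ∧
    (∀ g₁ g₂ g₃ g₄ : MagTrans,
      (↑(sptL φ k₁ k₆ lam g₂ g₃ g₄) : AddCircle (1 : ℝ)) -
          ↑(sptL φ k₁ k₆ lam (magMulL φ g₁ g₂) g₃ g₄) +
          ↑(sptL φ k₁ k₆ lam g₁ (magMulL φ g₂ g₃) g₄) -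
          ↑(sptL φ k₁ k₆ lam g₁ g₂ (magMulL φ g₃ g₄)) +
          ↑(sptL φ k₁ k₆ lam g₁ g₂ g₃) = 0) := by
  have key : ∀ g₁ g₂ g₃ g₄ : MagTrans,
      sptL φ k₁ k₆ lam g₂ g₃ g₄ - sptL φ k₁ k₆ lam (magMulL φ g₁ g₂) g₃ g₄ +
          sptL φ k₁ k₆ lam g₁ (magMulL φ g₂ g₃) g₄ - sptL φ k₁ k₆ lam g₁ g₂ (magMulL φ g₃ g₄) +
          sptL φ k₁ k₆ lam g₁ g₂ g₃ =
        (k₁ : ℝ) * FI φ g₁ g₂ * FI φ g₃ g₄ + (k₆ : ℝ) * FI φ g₁ g₂ * (wL g₃.2 g₄.2 : ℝ) := by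
    intro g₁ g₂ g₃ g₄
    have ha : rep1 (magMulL φ (magMulL φ g₂ g₃) g₄).1
        = rep1 (magMulL φ g₂ (magMulL φ g₃ g₄)).1 := by rw [magAssoc_fst]
    simp only [sptL, FI, magMulL, wL, Pi.add_apply, Int.cast_add, Int.cast_mul] at ha ⊢
    rw [ha]
    have hl := hlam g₁.2 g₂.2 g₃.2 g₄.2
    simp only [wL, Pi.add_apply, Int.cast_add, Int.cast_mul] at hl
    linear_combination ((k₁ : ℝ) * φ ^ 2 + (k₆ : ℝ) * φ) * hl
  have keyN : ∀ g₁ g₂ g₃ g₄ : MagTrans, ∃ N : ℤ,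
      (k₁ : ℝ) * FI φ g₁ g₂ * FI φ g₃ g₄ + (k₆ : ℝ) * FI φ g₁ g₂ * (wL g₃.2 g₄.2 : ℝ) = N := by
    intro g₁ g₂ g₃ g₄
    obtain ⟨n, hn⟩ := FI_int φ g₁ g₂
    obtain ⟨m, hm⟩ := FI_int φ g₃ g₄
    exact ⟨k₁ * n * m + k₆ * n * wL g₃.2 g₄.2, by rw [hn, hm]; push_cast; ring⟩
  refine ⟨key, keyN, fun g₁ g₂ g₃ g₄ => ?_⟩
  haveI : Fact ((0 : ℝ) < 1) := ⟨one_pos⟩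
  obtain ⟨N, hN⟩ := keyN g₁ g₂ g₃ g₄
  rw [← AddCircle.coe_sub, ← AddCircle.coe_add, ← AddCircle.coe_sub, ← AddCircle.coe_add,
    key g₁ g₂ g₃ g₄, hN, AddCircle.coe_eq_zero_iff]
  exact ⟨N, by simp⟩
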